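/- In a nonatomic routing game with strictly increasing, continuous link cost functions, if q and q' are two Wardrop equilibria then they induce the same link flows: z_l(q) = z_l(q') for every link l, and hence the same total social cost. -/
import Mathlib


open scoped Classical

/-- Essential uniqueness of Wardrop equilibria: with continuous, strictly increasing
link cost functions, any two Wardrop equilibria of a single-commodity nonatomic
routing game induce the same link flows and hence the same total social cost. -/
theorem wardrop_equilibria_same_link_flows {A P : Type*} [Fintype A] [Fintype P]
    (uses : P → Finset A) (f : A → ℝ → ℝ)
    (hfc : ∀ l, Continuous (f l)) (hfm : ∀ l, StrictMono (f l))
    (γ : ℝ) (hγ : 0 < γ)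
    (z : (P → ℝ) → A → ℝ)
    (hz : ∀ q l, z q l = ∑ p ∈ Finset.univ.filter fun p => l ∈ uses p, q p)
    (Cost : (P → ℝ) → P → ℝ)
    (hCost : ∀ q p, Cost q p = ∑ l ∈ uses p, f l (z q l))
    (q q' : P → ℝ)
    (hq : ∀ p, 0 ≤ q p) (hq1 : ∑ p, q p = γ)
    (hq' : ∀ p, 0 ≤ q' p) (hq1' : ∑ p, q' p = γ)
    (hW : ∀ p, 0 < q p → ∀ p'', Cost q p ≤ Cost q p'')
    (hW' : ∀ p, 0 < q' p → ∀ p'', Cost q' p ≤ Cost q' p'') :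
    (∀ l, z q l = z q' l) ∧
      ∑ l, z q l * f l (z q l) = ∑ l, z q' l * f l (z q' l) := by
  -- Variational inequality at an equilibrium
  have key : ∀ (u v : P → ℝ), (∀ p, 0 ≤ u p) → ∑ p, u p = γ →
      (∀ p, 0 < u p → ∀ p'', Cost u p ≤ Cost u p'') →
      (∀ p, 0 ≤ v p) → ∑ p, v p = γ →
      ∑ p, u p * Cost u p ≤ ∑ p, v p * Cost u p := by
    intro u v hu hu1 hWu hv hv1
    obtain ⟨p₀, hp₀⟩ : ∃ p, 0 < u p := by
      by_contra h
      push_neg at h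
      have h0 : ∑ p, u p = 0 :=
        Finset.sum_eq_zero fun p _ => le_antisymm (h p) (hu p)
      rw [hu1] at h0; linarith
    set lam := Cost u p₀ with hlam
    have hlam_le : ∀ p, lam ≤ Cost u p := fun p => hWu p₀ hp₀ p
    have hsum_u : ∑ p, u p * Cost u p = γ * lam := by
      rw [← hu1, Finset.sum_mul]
      apply Finset.sum_congr rfl
      intro p _
      rcases eq_or_lt_of_le (hu p) with h | h
      · simp [← h]
      · have h1 : Cost u p ≤ lam := hWu p h p₀
        rw [le_antisymm h1 (hlam_le p)]
    have hsum_v : γ * lam ≤ ∑ p, v p * Cost u p := by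
      rw [← hv1, Finset.sum_mul]
      exact Finset.sum_le_sum fun p _ => mul_le_mul_of_nonneg_left (hlam_le p) (hv p)
    linarith
  -- rewriting path sums as link sums
  have swap : ∀ (w u : P → ℝ), ∑ p, w p * Cost u p = ∑ l, z w l * f l (z u l) := by
    intro w u
    simp only [hCost, hz, Finset.mul_sum, Finset.sum_mul]
    rw [Finset.sum_comm' (t' := (Finset.univ : Finset A))
      (s' := fun l => Finset.univ.filter fun p => l ∈ uses p)]
    intro p l
    simp
  have vi1 := key q q' hq hq1 hW hq' hq1'
  have vi2 := key q' q hq' hq1' hW' hq hq1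
  rw [swap q q, swap q' q] at vi1
  rw [swap q' q', swap q q'] at vi2
  have hterm : ∀ l ∈ (Finset.univ : Finset A),
      0 ≤ (z q l - z q' l) * (f l (z q l) - f l (z q' l)) := by
    intro l _
    rcases lt_trichotomy (z q l) (z q' l) with h | h | h
    · have h1 : 0 ≤ (z q' l - z q l) * (f l (z q' l) - f l (z q l)) :=
        mul_nonneg (by linarith) (by linarith [hfm l h])
      nlinarith
    · simp [h]
    · have h1 : 0 ≤ (z q l - z q' l) * (f l (z q l) - f l (z q' l)) :=
        mul_nonneg (by linarith) (by linarith [hfm l h])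
      linarith
  have hS : ∑ l, (z q l - z q' l) * (f l (z q l) - f l (z q' l)) ≤ 0 := by
    have expand : ∑ l, (z q l - z q' l) * (f l (z q l) - f l (z q' l)) =
        (∑ l, z q l * f l (z q l) - ∑ l, z q' l * f l (z q l))
        + (∑ l, z q' l * f l (z q' l) - ∑ l, z q l * f l (z q' l)) := by
      rw [← Finset.sum_sub_distrib, ← Finset.sum_sub_distrib, ← Finset.sum_add_distrib]
      apply Finset.sum_congr rfl
      intro l _
      ring
    rw [expand]; linarith
  have hS0 : ∑ l, (z q l - z q' l) * (f l (z q l) - f l (z q' l)) = 0 :=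
    le_antisymm hS (Finset.sum_nonneg hterm)
  have hzeq : ∀ l, z q l = z q' l := by
    intro l
    have h0 := (Finset.sum_eq_zero_iff_of_nonneg hterm).mp hS0 l (Finset.mem_univ l)
    by_contra hne
    rcases lt_or_gt_of_ne hne with h | h
    · have hf := hfm l h
      nlinarith
    · have hf := hfm l h
      nlinarith
  exact ⟨hzeq, by simp [hzeq]⟩
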